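/- Let A be a real m×n matrix, b ∈ ℝ^m with b not in the column space of A, and let C = (A | b). Suppose v = (v̂ᵀ, γ)ᵀ ∈ ℝ^{n+1} is a unit eigenvector of CᵀC for a positive eigenvalue λ, with γ < 0, and set u = (1/√λ) C v. If x_LS ∈ ℝ^n satisfies the normal equations AᵀA x_LS = Aᵀ b, then uᵀ f(x_LS) > 0, where f(x) = (1 + xᵀx)^{−1/2} (Ax − b). -/
import Mathlib


open Matrix BigOperators

/-- Euclidean norm of a vector in ℝ^k. -/
noncomputable def vnorm {k : ℕ} (v : Fin k → ℝ) : ℝ := Real.sqrt (∑ i, (v i) ^ 2)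

/-- f(x) = (1 + xᵀx)^(−1/2) (Ax − b). -/
noncomputable def fTLS {m n : ℕ} (A : Matrix (Fin m) (Fin n) ℝ) (b : Fin m → ℝ)
    (x : Fin n → ℝ) : Fin m → ℝ :=
  (1 / Real.sqrt (1 + x ⬝ᵥ x)) • (A.mulVec x - b)

theorem stmt_18 {m n : ℕ} (A : Matrix (Fin m) (Fin n) ℝ) (b : Fin m → ℝ)
    (hb : ∀ y : Fin n → ℝ, A.mulVec y ≠ b)
    (C : Matrix (Fin m) (Fin (n + 1)) ℝ)
    (hC : C = Matrix.of fun i => Fin.snoc (A i) (b i))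
    (lam : ℝ) (hlam : 0 < lam)
    (v : Fin (n + 1) → ℝ) (hv : (Cᵀ * C).mulVec v = lam • v)
    (hvn : vnorm v = 1) (hγ : v (Fin.last n) < 0)
    (u : Fin m → ℝ) (hu : u = (1 / Real.sqrt lam) • C.mulVec v)
    (xLS : Fin n → ℝ) (hxLS : (Aᵀ * A).mulVec xLS = Aᵀ.mulVec b) :
    u ⬝ᵥ fTLS A b xLS > 0 := by
  set w : Fin m → ℝ := A.mulVec xLS - b with hw
  have hw0 : w ≠ 0 := by
    intro h
    exact hb xLS (sub_eq_zero.mp h)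
  have hww : 0 < w ⬝ᵥ w := by
    have hnn : 0 ≤ w ⬝ᵥ w := Finset.sum_nonneg fun i _ => mul_self_nonneg _
    rcases lt_or_eq_of_le hnn with h | h
    · exact h
    · exact absurd (dotProduct_self_eq_zero.mp h.symm) hw0
  have hAtw : Aᵀ.mulVec w = 0 := by
    rw [hw, Matrix.mulVec_sub, Matrix.mulVec_mulVec, hxLS, sub_self]
  -- for any y : Fin n → ℝ, (A *ᵥ y) ⬝ᵥ w = 0
  have hkey : ∀ y : Fin n → ℝ, (A.mulVec y) ⬝ᵥ w = 0 := by
    intro y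
    have : (A.mulVec y) ⬝ᵥ w = y ⬝ᵥ (Aᵀ.mulVec w) := by
      rw [Matrix.dotProduct_mulVec, Matrix.vecMul_transpose]
    rw [this, hAtw, dotProduct_zero]
  have hbw : b ⬝ᵥ w = -(w ⬝ᵥ w) := by
    have h1 : w ⬝ᵥ w = (A.mulVec xLS) ⬝ᵥ w - b ⬝ᵥ w := by
      rw [hw, sub_dotProduct]
    rw [hkey xLS] at h1
    linarith
  have hCv : C.mulVec v =
      A.mulVec (fun j => v j.castSucc) + (v (Fin.last n)) • b := by
    funext i
    simp [hC, Matrix.mulVec, dotProduct, Fin.sum_univ_castSucc, Fin.snoc,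
      mul_comm]
  have hCvw : (C.mulVec v) ⬝ᵥ w = (v (Fin.last n)) * (b ⬝ᵥ w) := by
    rw [hCv, add_dotProduct, hkey, smul_dotProduct, zero_add,
      smul_eq_mul]
  have hs : 0 < Real.sqrt (1 + xLS ⬝ᵥ xLS) := by
    apply Real.sqrt_pos.mpr
    have : 0 ≤ xLS ⬝ᵥ xLS := Finset.sum_nonneg fun i _ => mul_self_nonneg _
    linarith
  have hsl : 0 < Real.sqrt lam := Real.sqrt_pos.mpr hlam
  have : u ⬝ᵥ fTLS A b xLS =
      (1 / Real.sqrt lam) * ((1 / Real.sqrt (1 + xLS ⬝ᵥ xLS)) *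
        ((v (Fin.last n)) * (b ⬝ᵥ w))) := by
    rw [hu, fTLS, smul_dotProduct, dotProduct_smul, ← hw, hCvw,
      smul_eq_mul, smul_eq_mul]
  rw [this, hbw]
  have hpos : 0 < (v (Fin.last n)) * (-(w ⬝ᵥ w)) := mul_pos_of_neg_of_neg hγ (by linarith)
  positivity
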